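/- Let C be a category with pullbacks and pushouts in which colimits are universal (pullback along any morphism preserves pushouts). If α: U → X and β: V → X are Zariski morphisms (monomorphisms), then the induced morphism from the pushout U ∪ V := U ⊔_{U ×_X V} V to X is again a Zariski morphism, and moreover (U ∪ V) ×_X (U ∪ V) ≅ U ∪ V. -/

import Mathlib

open CategoryTheory CategoryTheory.Limits

/-- A morphism is a *Zariski morphism* if its relative diagonal is an isomorphism. -/
def IsZariskiMorphism {C : Type*} [Category C] [HasPullbacks C] {A B : C} (f : A ⟶ B) : Prop :=
  IsIso (pullback.diagonal f)

/-- Decomposition of the pullback of the union along any morphism `g : Y ⟶ X`: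
the pullbacks of the two pieces map to it, jointly epimorphically, compatibly with
the projections. -/
lemma zariski_union_decomp {C : Type*} [Category C] [HasPullbacks C] [HasPushouts C]
    {U V X : C} (α : U ⟶ X) (β : V ⟶ X) {Y : C} (g : Y ⟶ X)
    [PreservesColimits (Over.pullback g)] :
    ∃ (a : pullback α g ⟶ pullback (pushout.desc α β pullback.condition) g)
      (b : pullback β g ⟶ pullback (pushout.desc α β pullback.condition) g),
      a ≫ pullback.fst (pushout.desc α β pullback.condition) g
          = pullback.fst α g ≫ pushout.inl (pullback.fst α β) (pullback.snd α β) ∧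
      a ≫ pullback.snd (pushout.desc α β pullback.condition) g = pullback.snd α g ∧
      b ≫ pullback.fst (pushout.desc α β pullback.condition) g
          = pullback.fst β g ≫ pushout.inr (pullback.fst α β) (pullback.snd α β) ∧
      b ≫ pullback.snd (pushout.desc α β pullback.condition) g = pullback.snd β g ∧
      ∀ {T : C} (h k : pullback (pushout.desc α β pullback.condition) g ⟶ T),
        a ≫ h = a ≫ k → b ≫ h = b ≫ k → h = k := by
  set f1 := pullback.fst α β with hf1
  set f2 := pullback.snd α β with hf2
  have hP : IsPushout f1 f2 (pushout.inl f1 f2) (pushout.inr f1 f2) :=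
    IsPushout.of_hasPushout f1 f2
  let l : Over.mk (f1 ≫ α) ⟶ Over.mk α := Over.homMk f1
  let r : Over.mk (f1 ≫ α) ⟶ Over.mk β := Over.homMk f2 pullback.condition.symm
  let il : Over.mk α ⟶ Over.mk (pushout.desc α β pullback.condition) :=
    Over.homMk (pushout.inl f1 f2) (pushout.inl_desc _ _ _)
  let ir : Over.mk β ⟶ Over.mk (pushout.desc α β pullback.condition) :=
    Over.homMk (pushout.inr f1 f2) (pushout.inr_desc _ _ _)
  have hP' : IsPushout l r il ir := by
    apply IsPushout.of_map (Over.forget X)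
    · exact Over.OverMorphism.ext pushout.condition
    · exact hP
  have hQ := hP'.map (Over.pullback g)
  haveI : HasColimit (span ((Over.pullback g).map l) ((Over.pullback g).map r) ⋙
      Over.forget Y) :=
    hasColimit_of_iso (spanCompIso (Over.forget Y) _ _)
  have hR := hQ.map (Over.forget Y)
  refine ⟨((Over.pullback g).map il).left, ((Over.pullback g).map ir).left,
    ?_, ?_, ?_, ?_, ?_⟩
  · simp [il]; exact pullback.lift_fst _ _ _
  · simp [il]; exact pullback.lift_snd _ _ _
  · simp [ir]; exact pullback.lift_fst _ _ _
  · simp [ir]; exact pullback.lift_snd _ _ _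
  · intro T h k h1 h2
    exact hR.hom_ext h1 h2

/-- in a category with pullbacks and pushouts in which colimits are universal
(pullback along any morphism preserves colimits), the union `U ∪ V := U ⊔_{U ×_X V} V` of two
Zariski morphisms `α : U ⟶ X`, `β : V ⟶ X` maps to `X` by a Zariski morphism, and
`(U ∪ V) ×_X (U ∪ V) ≅ U ∪ V`. -/
theorem zariski_union {C : Type*} [Category C] [HasPullbacks C] [HasPushouts C]
    (huniv : ∀ {W X : C} (g : W ⟶ X), PreservesColimits (Over.pullback g))
    {U V X : C} (α : U ⟶ X) (β : V ⟶ X)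
    (hα : IsZariskiMorphism α) (hβ : IsZariskiMorphism β)
    (γ : pushout (pullback.fst α β) (pullback.snd α β) ⟶ X)
    (hγ : γ = pushout.desc α β pullback.condition) :
    IsZariskiMorphism γ ∧
      Nonempty (pullback γ γ ≅ pushout (pullback.fst α β) (pullback.snd α β)) := by
  haveI : IsIso (pullback.diagonal α) := hα
  haveI : IsIso (pullback.diagonal β) := hβ
  have heqα : pullback.fst α α = pullback.snd α α := by
    rw [← cancel_epi (pullback.diagonal α)]; simp
  have heqβ : pullback.fst β β = pullback.snd β β := by
    rw [← cancel_epi (pullback.diagonal β)]; simp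
  subst hγ
  set γ' := pushout.desc α β pullback.condition with hγ'
  haveI := huniv γ'
  haveI := huniv α
  haveI := huniv β
  obtain ⟨a1, b1, ha1f, ha1s, hb1f, hb1s, je1⟩ := zariski_union_decomp α β γ'
  obtain ⟨a2, b2, ha2f, ha2s, hb2f, hb2s, je2⟩ := zariski_union_decomp α β α
  obtain ⟨a3, b3, ha3f, ha3s, hb3f, hb3s, je3⟩ := zariski_union_decomp α β β
  -- the key equality: the two projections of `pullback γ' γ'` agree
  have key : pullback.fst γ' γ' = pullback.snd γ' γ' := by
    apply je1
    · -- restrict to the `U`-piece, i.e. `pullback α γ'`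
      rw [← cancel_epi (pullbackSymmetry γ' α).hom]
      apply je2
      · calc a2 ≫ (pullbackSymmetry γ' α).hom ≫ a1 ≫ pullback.fst γ' γ'
            = a2 ≫ (pullbackSymmetry γ' α).hom ≫ pullback.fst α γ'
                ≫ pushout.inl (pullback.fst α β) (pullback.snd α β) := by rw [ha1f]
          _ = a2 ≫ pullback.snd γ' α
                ≫ pushout.inl (pullback.fst α β) (pullback.snd α β) := by
                rw [← Category.assoc (pullbackSymmetry γ' α).hom,
                  pullbackSymmetry_hom_comp_fst]
          _ = pullback.snd α α ≫ pushout.inl (pullback.fst α β) (pullback.snd α β) := by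
                rw [← Category.assoc, ha2s]
          _ = pullback.fst α α ≫ pushout.inl (pullback.fst α β) (pullback.snd α β) := by
                rw [heqα]
          _ = a2 ≫ pullback.fst γ' α := by rw [← ha2f]
          _ = a2 ≫ (pullbackSymmetry γ' α).hom ≫ pullback.snd α γ' := by
                rw [pullbackSymmetry_hom_comp_snd]
          _ = a2 ≫ (pullbackSymmetry γ' α).hom ≫ a1 ≫ pullback.snd γ' γ' := by rw [ha1s]
      · calc b2 ≫ (pullbackSymmetry γ' α).hom ≫ a1 ≫ pullback.fst γ' γ'
            = b2 ≫ (pullbackSymmetry γ' α).hom ≫ pullback.fst α γ'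
                ≫ pushout.inl (pullback.fst α β) (pullback.snd α β) := by rw [ha1f]
          _ = b2 ≫ pullback.snd γ' α
                ≫ pushout.inl (pullback.fst α β) (pullback.snd α β) := by
                rw [← Category.assoc (pullbackSymmetry γ' α).hom,
                  pullbackSymmetry_hom_comp_fst]
          _ = pullback.snd β α ≫ pushout.inl (pullback.fst α β) (pullback.snd α β) := by
                rw [← Category.assoc, hb2s]
          _ = pullback.fst β α ≫ pushout.inr (pullback.fst α β) (pullback.snd α β) := by
                rw [← cancel_epi (pullbackSymmetry α β).hom,
                  ← Category.assoc, ← Category.assoc, pullbackSymmetry_hom_comp_snd,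
                  pullbackSymmetry_hom_comp_fst, pushout.condition]
          _ = b2 ≫ pullback.fst γ' α := by rw [← hb2f]
          _ = b2 ≫ (pullbackSymmetry γ' α).hom ≫ pullback.snd α γ' := by
                rw [pullbackSymmetry_hom_comp_snd]
          _ = b2 ≫ (pullbackSymmetry γ' α).hom ≫ a1 ≫ pullback.snd γ' γ' := by rw [ha1s]
    · -- restrict to the `V`-piece, i.e. `pullback β γ'`
      rw [← cancel_epi (pullbackSymmetry γ' β).hom]
      apply je3
      · calc a3 ≫ (pullbackSymmetry γ' β).hom ≫ b1 ≫ pullback.fst γ' γ'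
            = a3 ≫ (pullbackSymmetry γ' β).hom ≫ pullback.fst β γ'
                ≫ pushout.inr (pullback.fst α β) (pullback.snd α β) := by rw [hb1f]
          _ = a3 ≫ pullback.snd γ' β
                ≫ pushout.inr (pullback.fst α β) (pullback.snd α β) := by
                rw [← Category.assoc (pullbackSymmetry γ' β).hom,
                  pullbackSymmetry_hom_comp_fst]
          _ = pullback.snd α β ≫ pushout.inr (pullback.fst α β) (pullback.snd α β) := by
                rw [← Category.assoc, ha3s]
          _ = pullback.fst α β ≫ pushout.inl (pullback.fst α β) (pullback.snd α β) := by
                rw [pushout.condition]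
          _ = a3 ≫ pullback.fst γ' β := by rw [← ha3f]
          _ = a3 ≫ (pullbackSymmetry γ' β).hom ≫ pullback.snd β γ' := by
                rw [pullbackSymmetry_hom_comp_snd]
          _ = a3 ≫ (pullbackSymmetry γ' β).hom ≫ b1 ≫ pullback.snd γ' γ' := by rw [hb1s]
      · calc b3 ≫ (pullbackSymmetry γ' β).hom ≫ b1 ≫ pullback.fst γ' γ'
            = b3 ≫ (pullbackSymmetry γ' β).hom ≫ pullback.fst β γ'
                ≫ pushout.inr (pullback.fst α β) (pullback.snd α β) := by rw [hb1f]
          _ = b3 ≫ pullback.snd γ' β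
                ≫ pushout.inr (pullback.fst α β) (pullback.snd α β) := by
                rw [← Category.assoc (pullbackSymmetry γ' β).hom,
                  pullbackSymmetry_hom_comp_fst]
          _ = pullback.snd β β ≫ pushout.inr (pullback.fst α β) (pullback.snd α β) := by
                rw [← Category.assoc, hb3s]
          _ = pullback.fst β β ≫ pushout.inr (pullback.fst α β) (pullback.snd α β) := by
                rw [heqβ]
          _ = b3 ≫ pullback.fst γ' β := by rw [← hb3f]
          _ = b3 ≫ (pullbackSymmetry γ' β).hom ≫ pullback.snd β γ' := by
                rw [pullbackSymmetry_hom_comp_snd]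
          _ = b3 ≫ (pullbackSymmetry γ' β).hom ≫ b1 ≫ pullback.snd γ' γ' := by rw [hb1s]
  haveI : Mono γ' := by
    constructor
    intro Z u v huv
    have h1 : pullback.lift u v huv ≫ pullback.fst γ' γ' = u := pullback.lift_fst _ _ _
    have h2 : pullback.lift u v huv ≫ pullback.snd γ' γ' = v := pullback.lift_snd _ _ _
    rw [← h1, key, h2]
  haveI : IsIso (pullback.diagonal γ') := by
    refine ⟨pullback.fst γ' γ', pullback.diagonal_fst γ', ?_⟩
    rw [← cancel_mono (pullback.fst γ' γ')]
    simp
  exact ⟨this, ⟨(asIso (pullback.diagonal γ')).symm⟩⟩
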